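/- The domain Ω₁ = {(z,w) ∈ ℂ² : |z|² + |w|² - 1 < |z² + w² - 1|} is contained in the product domain {(z,w) ∈ ℂ² : z ∉ (-∞,-1] ∪ [1,∞) and w ∉ (-∞,-1] ∪ [1,∞)}, where the excluded sets are real intervals on the real axis in ℂ. -/

import Mathlib

open Complex

lemma aux_16 (z w : ℂ)
    (h : ‖z‖ ^ 2 + ‖w‖ ^ 2 - 1
        < ‖z ^ 2 + w ^ 2 - 1‖) :
    z.im = 0 → |z.re| < 1 := by
  intro hz
  by_contra hx
  push_neg at hx
  set x := z.re with hxdef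
  have hz' : z = (x : ℂ) := by
    apply Complex.ext <;> simp [hz, hxdef]
  have hx2 : (1:ℝ) ≤ x ^ 2 := by
    have := abs_nonneg x
    nlinarith [_root_.sq_abs x]
  have habsz : ‖z‖ = |x| := by rw [hz', Complex.norm_real, Real.norm_eq_abs]
  have key : ‖z ^ 2 + w ^ 2 - 1‖ ≤ (x ^ 2 - 1) + ‖w‖ ^ 2 := by
    have : z ^ 2 + w ^ 2 - 1 = (z ^ 2 - 1) + w ^ 2 := by ring
    rw [this]
    have h1 : ‖z ^ 2 - 1‖ = x ^ 2 - 1 := by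
      rw [hz']
      have : ((x:ℂ) ^ 2 - 1) = ((x ^ 2 - 1 : ℝ) : ℂ) := by push_cast; ring
      rw [this, Complex.norm_real, Real.norm_eq_abs, _root_.abs_of_nonneg (by linarith : (0:ℝ) ≤ x ^ 2 - 1)]
    have h2 : ‖w ^ 2‖ = ‖w‖ ^ 2 := by
      rw [norm_pow]
    calc ‖(z ^ 2 - 1) + w ^ 2‖ ≤ ‖z ^ 2 - 1‖ + ‖w ^ 2‖ :=
          norm_add_le _ _
      _ = (x ^ 2 - 1) + ‖w‖ ^ 2 := by rw [h1, h2]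
  rw [habsz, _root_.sq_abs] at h
  linarith

theorem stmt_16 (z w : ℂ)
    (h : ‖z‖ ^ 2 + ‖w‖ ^ 2 - 1
        < ‖z ^ 2 + w ^ 2 - 1‖) :
    (z.im = 0 → |z.re| < 1) ∧ (w.im = 0 → |w.re| < 1) := by
  refine ⟨aux_16 z w h, aux_16 w z ?_⟩
  have e1 : w ^ 2 + z ^ 2 - 1 = z ^ 2 + w ^ 2 - 1 := by ring
  rw [e1]; linarith
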